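/- Let G be an icc group with a normal centerless subgroup K, conjugation homomorphism π : G → Aut(K), and induced θ : G/K → Out(K). Then K contains no nontrivial normal subgroup N, either finite or isomorphic to ℤⁿ, preserved by π(G) and with only finite π(G)-orbits, and θ restricted to FC(G/K) is injective. -/

import Mathlib

def IsICC (G : Type*) [Group G] : Prop :=
  Nontrivial G ∧ ∀ g : G, g ≠ 1 → {h : G | IsConj g h}.Infinite

/-- The subgroup of inner automorphisms of K. -/
def Inn (K : Type*) [Group K] : Subgroup (MulAut K) := (MulAut.conj : K →* MulAut K).range

instance Inn.normal (K : Type*) [Group K] : (Inn K).Normal := by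
  constructor
  rintro x ⟨k, rfl⟩ φ
  refine ⟨φ k, ?_⟩
  ext h
  simp [MulAut.conj_apply, map_mul, mul_assoc]

/-- The outer automorphism group of K. -/
def Out (K : Type*) [Group K] := MulAut K ⧸ Inn K

instance (K : Type*) [Group K] : Group (Out K) :=
  inferInstanceAs (Group (MulAut K ⧸ Inn K))

/-- Theorem 2, necessity: if an extension of a centerless group K is icc then (i) K has no
nontrivial normal subgroup, finite or ≅ ℤⁿ, preserved by π(G) with only finite π(G)-orbits,
and (ii) θ : G/K → Out(K) is injective on FC(G/K). -/
theorem centerless_extension_of_icc {G : Type*} [Group G]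
    (K : Subgroup G) [K.Normal] (hZ : Subgroup.center K = ⊥)
    (π : G →* MulAut K)
    (hπ : ∀ (g : G) (k : K), ((π g k : K) : G) = g * (k : G) * g⁻¹)
    (θ : G ⧸ K →* Out K)
    (hθ : ∀ g : G, θ (QuotientGroup.mk g) = QuotientGroup.mk (π g))
    (hicc : IsICC G) :
    (¬ ∃ N : Subgroup K, N ≠ ⊥ ∧ N.Normal ∧
      (∀ (g : G), ∀ n ∈ N, π g n ∈ N) ∧
      (Finite N ∨ ∃ n : ℕ, Nonempty (N ≃* Multiplicative (Fin n → ℤ))) ∧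
      (∀ n ∈ N, {x : K | ∃ g : G, π g n = x}.Finite)) ∧
    Set.InjOn θ {q : G ⧸ K | {r : G ⧸ K | IsConj q r}.Finite} := by
  obtain ⟨_, hicc'⟩ := hicc
  have key : ∀ g : G, {h : G | IsConj g h}.Finite → g = 1 := by
    intro g hf
    by_contra hg
    exact hicc' g hg hf
  constructor
  · rintro ⟨N, hNne, _, _, _, hfin⟩
    obtain ⟨a, ha⟩ := Subgroup.ne_bot_iff_exists_ne_one.mp hNne
    have hn1 : ((a : K) : G) ≠ 1 := by
      intro h
      apply ha
      have : (a : K) = 1 := Subtype.ext h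
      exact Subtype.ext this
    apply hn1
    apply key
    have hsub : {h : G | IsConj ((a : K) : G) h} ⊆
        (fun x : K => (x : G)) '' {x : K | ∃ g : G, π g (a : K) = x} := by
      rintro h hx
      obtain ⟨c, hc⟩ := isConj_iff.mp hx
      refine ⟨π c (a : K), ⟨c, rfl⟩, ?_⟩
      show ((π c (a : K) : K) : G) = h
      rw [hπ, hc]
    exact ((hfin _ a.2).image _).subset hsub
  · have kerFC : ∀ s : G ⧸ K, {r : G ⧸ K | IsConj s r}.Finite → θ s = 1 → s = 1 := by
      intro s hsFC hs1
      obtain ⟨g, rfl⟩ := QuotientGroup.mk_surjective s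
      have h1 : (QuotientGroup.mk (π g) : Out K) = 1 := by rw [← hθ, hs1]; rfl
      obtain ⟨k, hk⟩ := (QuotientGroup.eq_one_iff _).mp h1
      set g' := g * (k : G)⁻¹ with hg'
      have hmkg' : (QuotientGroup.mk g' : G ⧸ K) = QuotientGroup.mk g := by
        apply QuotientGroup.eq.mpr
        have : g'⁻¹ * g = (k : G) := by rw [hg']; group
        rw [this]; exact k.2
      -- g' centralizes K
      have F : ∀ m : K, g * (m : G) * g⁻¹ = (k : G) * (m : G) * (k : G)⁻¹ := by
        intro m
        rw [← hπ g m, ← hk]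
        rfl
      have hcent : ∀ m : K, g' * (m : G) = (m : G) * g' := by
        intro m
        have F2 : g * ((k : G)⁻¹ * (m : G) * (k : G)) * g⁻¹ = (m : G) := by
          have := F (k⁻¹ * m * k)
          push_cast at this
          rw [this]; group
        rw [hg']
        nth_rewrite 2 [← F2]
        group
      -- conjugates of g' centralize K
      have hcent' : ∀ c : G, ∀ m : K, (c * g' * c⁻¹) * (m : G) = (m : G) * (c * g' * c⁻¹) := by
        intro c m
        have hwK : c⁻¹ * (m : G) * c ∈ K := by
          have := Subgroup.Normal.conj_mem ‹K.Normal› _ m.2 c⁻¹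
          simpa using this
        have hw := hcent ⟨c⁻¹ * (m : G) * c, hwK⟩
        simp only [Subgroup.coe_mk] at hw
        calc c * g' * c⁻¹ * (m : G) = c * (g' * (c⁻¹ * (m : G) * c)) * c⁻¹ := by group
          _ = c * ((c⁻¹ * (m : G) * c) * g') * c⁻¹ := by rw [hw]
          _ = (m : G) * (c * g' * c⁻¹) := by group
      -- the conjugacy class of g' in G is finite
      have hfin' : {h : G | IsConj g' h}.Finite := by
        apply Set.Finite.of_finite_image (f := (QuotientGroup.mk : G → G ⧸ K))
        · apply hsFC.subset
          rintro x ⟨h, hh, rfl⟩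
          obtain ⟨c, hc⟩ := isConj_iff.mp hh
          refine isConj_iff.mpr ⟨QuotientGroup.mk c, ?_⟩
          rw [← hc]
          simp [← hmkg', QuotientGroup.mk_mul, QuotientGroup.mk_inv]
        · intro t1 ht1 t2 ht2 hmk
          obtain ⟨c1, hc1⟩ := isConj_iff.mp ht1
          obtain ⟨c2, hc2⟩ := isConj_iff.mp ht2
          have hdK : t1⁻¹ * t2 ∈ K := QuotientGroup.eq.mp hmk
          have hdcent : ∀ m : K, (t1⁻¹ * t2) * (m : G) = (m : G) * (t1⁻¹ * t2) := by
            intro m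
            have h1 := hcent' c1 m
            have h2 := hcent' c2 m
            rw [hc1] at h1
            rw [hc2] at h2
            have h1' : t1⁻¹ * (m : G) = (m : G) * t1⁻¹ := by
              have : t1⁻¹ * (t1 * (m : G)) * t1⁻¹ = t1⁻¹ * ((m : G) * t1) * t1⁻¹ := by rw [h1]
              calc t1⁻¹ * (m : G) = t1⁻¹ * ((m : G) * t1) * t1⁻¹ := by group
                _ = t1⁻¹ * (t1 * (m : G)) * t1⁻¹ := by rw [h1]
                _ = (m : G) * t1⁻¹ := by group
            calc t1⁻¹ * t2 * (m : G) = t1⁻¹ * (t2 * (m : G)) := by group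
              _ = t1⁻¹ * ((m : G) * t2) := by rw [h2]
              _ = (t1⁻¹ * (m : G)) * t2 := by group
              _ = (m : G) * (t1⁻¹ * t2) := by rw [h1']; group
          have hmem : (⟨t1⁻¹ * t2, hdK⟩ : K) ∈ Subgroup.center K := by
            rw [Subgroup.mem_center_iff]
            intro m
            ext
            exact (hdcent m).symm
          rw [hZ, Subgroup.mem_bot] at hmem
          have : t1⁻¹ * t2 = 1 := by simpa using congrArg (Subtype.val) hmem
          calc t1 = t1 * (t1⁻¹ * t2) := by rw [this]; group
            _ = t2 := by group
      have hg'1 : g' = 1 := key g' hfin'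
      rw [← hmkg', hg'1]
      rfl
    intro q hq r hr heq
    have hs : θ (q * r⁻¹) = 1 := by
      rw [map_mul, map_inv, heq, mul_inv_cancel]
    have hsFC : {x : G ⧸ K | IsConj (q * r⁻¹) x}.Finite := by
      have hsub : {x : G ⧸ K | IsConj (q * r⁻¹) x} ⊆
          Set.image2 (fun a b => a * b⁻¹) {x : G ⧸ K | IsConj q x} {x : G ⧸ K | IsConj r x} := by
        rintro x hx
        obtain ⟨c, hc⟩ := isConj_iff.mp hx
        refine ⟨c * q * c⁻¹, isConj_iff.mpr ⟨c, rfl⟩, c * r * c⁻¹, isConj_iff.mpr ⟨c, rfl⟩, ?_⟩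
        rw [← hc]; group
      exact (Set.Finite.image2 _ hq hr).subset hsub
    exact mul_inv_eq_one.mp (kerFC _ hsFC hs)
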